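/- Let X, Y be strings of length n and suppose ED(X[Δ..n), Y[0..n−Δ)) ≤ γ for some Δ ∈ [0, β) with β ≤ n. Let x ∈ [Δ, β] and y ∈ [0, x−Δ] with x − Δ − y ≤ γ, and set n' = n − β. Then ED(X[x..x+n'), Y[y..y+n')) ≤ 3γ. -/

import Mathlib

/-- Levenshtein cost structure (removed from Mathlib; restored with its old definition). -/
structure Levenshtein.Cost (α β δ : Type*) where
  delete : α → δ
  insert : β → δ
  substitute : α → β → δ

/-- The default unit costs (restored from the older Mathlib). -/
def Levenshtein.defaultCost {α : Type*} [DecidableEq α] : Levenshtein.Cost α α ℕ :=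
  ⟨fun _ => 1, fun _ => 1, fun a b => if a = b then 0 else 1⟩

/-- Helper of the older Mathlib's `suffixLevenshtein`. -/
def Levenshtein.impl {α β δ : Type*} [AddZeroClass δ] [Min δ] (C : Levenshtein.Cost α β δ)
    (xs : List α) (y : β) (d : {r : List δ // 0 < r.length}) :
    {r : List δ // 0 < r.length} :=
  let ⟨ds, w⟩ := d
  xs.zip (ds.zip ds.tail) |>.foldr
    (init := ⟨[ds.getLast (List.length_pos_iff.mp w) + C.insert y], by simp⟩)
    (fun ⟨x, d₀, d₁⟩ ⟨r, w⟩ =>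
      ⟨min (C.delete x + r[0]) (min (C.insert y + d₀) (C.substitute x y + d₁)) :: r, by simp⟩)

/-- Suffix Levenshtein distances (restored from the older Mathlib). -/
def suffixLevenshtein {α β δ : Type*} [AddZeroClass δ] [Min δ] (C : Levenshtein.Cost α β δ)
    (xs : List α) (ys : List β) : {r : List δ // 0 < r.length} :=
  ys.foldr
    (Levenshtein.impl C xs)
    (xs.foldr (init := ⟨[0], by simp⟩) (fun a ⟨ds, w⟩ => ⟨(C.delete a + ds[0]) :: ds, by simp⟩))

/-- Levenshtein distance (restored from the older Mathlib). -/
def levenshtein {α β δ : Type*} [AddZeroClass δ] [Min δ] (C : Levenshtein.Cost α β δ)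
    (xs : List α) (ys : List β) : δ :=
  let ⟨r, w⟩ := suffixLevenshtein C xs ys
  r[0]

/-- The edit distance between two lists (Levenshtein distance with unit costs). -/
def ED {α : Type*} [DecidableEq α] (X Y : List α) : ℕ :=
  levenshtein Levenshtein.defaultCost X Y


namespace LevPort
variable {α β δ : Type*} [AddZeroClass δ] [Min δ] (C : Levenshtein.Cost α β δ)

theorem impl_cons (x : α) (xs : List α) (y : β) (d : δ) (ds : List δ) (w) (w' : 0 < List.length ds) :
    Levenshtein.impl C (x :: xs) y ⟨d :: ds, w⟩ =
      let ⟨r, w⟩ := Levenshtein.impl C xs y ⟨ds, w'⟩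
      ⟨min (C.delete x + r[0]) (min (C.insert y + d) (C.substitute x y + ds[0])) :: r, by simp⟩ :=
  match ds, w' with | _ :: _, _ => rfl

theorem impl_cons_fst_zero (x : α) (xs : List α) (y : β) (d : δ) (ds : List δ) (w) (h)
    (w' : 0 < List.length ds) :
    (Levenshtein.impl C (x :: xs) y ⟨d :: ds, w⟩).1[0]'h =
      let ⟨r, w⟩ := Levenshtein.impl C xs y ⟨ds, w'⟩
      min (C.delete x + r[0]) (min (C.insert y + d) (C.substitute x y + ds[0])) :=
  match ds, w' with | _ :: _, _ => rfl

theorem impl_length (xs : List α) (y : β) (d : {r : List δ // 0 < r.length})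
    (w : d.1.length = xs.length + 1) :
    (Levenshtein.impl C xs y d).1.length = xs.length + 1 := by
  induction xs generalizing d with
  | nil => rfl
  | cons x xs ih =>
    match d, w with
    | ⟨d₁ :: d₂ :: ds, _⟩, w =>
      rw [impl_cons C x xs y d₁ (d₂ :: ds) _ (by simp)]
      simp only [List.length_cons]
      congr 1
      exact ih ⟨d₂ :: ds, (by simp)⟩ (by simpa using w)

theorem suffixLevenshtein_length (xs : List α) (ys : List β) :
    (suffixLevenshtein C xs ys).1.length = xs.length + 1 := by
  induction ys with
  | nil =>
    dsimp [suffixLevenshtein]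
    induction xs with
    | nil => rfl
    | cons _ xs ih => simp_all
  | cons y ys ih =>
    dsimp [suffixLevenshtein]
    rw [impl_length]
    exact ih

theorem suffixLevenshtein_cons₁_aux {α} {x y : {r : List α // 0 < r.length}}
    (w₀ : x.1[0]'x.2 = y.1[0]'y.2) (w : x.1.tail = y.1.tail) : x = y := by
  match x, y with
  | ⟨hx :: tx, _⟩, ⟨hy :: ty, _⟩ => simp_all

theorem suffixLevenshtein_cons₁ (x : α) (xs ys) :
    suffixLevenshtein C (x :: xs) ys =
      ⟨levenshtein C (x :: xs) ys :: (suffixLevenshtein C xs ys).1, by simp⟩ := by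
  induction ys with
  | nil => rfl
  | cons y ys ih =>
    apply suffixLevenshtein_cons₁_aux
    · rfl
    · show (Levenshtein.impl C (x :: xs) y (suffixLevenshtein C (x :: xs) ys)).1.tail = _
      rw [ih, impl_cons]
      · rfl
      · simp [suffixLevenshtein_length]

end LevPort

theorem levenshtein_nil_cons {α : Type*} [DecidableEq α] (y : α) (ys : List α) :
    levenshtein (Levenshtein.defaultCost (α := α)) [] (y :: ys) =
      1 + levenshtein (Levenshtein.defaultCost (α := α)) [] ys := by
  have hl := LevPort.suffixLevenshtein_length (Levenshtein.defaultCost (α := α)) [] ys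
  show (Levenshtein.impl _ [] y (suffixLevenshtein _ [] ys)).1[0]'(Levenshtein.impl _ [] y (suffixLevenshtein _ [] ys)).2 = 1 + (suffixLevenshtein _ [] ys).1[0]'(suffixLevenshtein _ [] ys).2
  generalize suffixLevenshtein (Levenshtein.defaultCost (α := α)) [] ys = d at hl ⊢
  obtain ⟨r, w⟩ := d
  simp only [List.length_nil] at hl
  match r, hl with
  | [a], _ => simp [Levenshtein.impl, Levenshtein.defaultCost, Nat.add_comm]
  | _ :: _ :: _, h => simp at h

@[simp]
theorem levenshtein_nil_nil {α : Type*} [DecidableEq α] :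
    levenshtein (Levenshtein.defaultCost (α := α)) [] [] = 0 := rfl

theorem levenshtein_cons_nil {α : Type*} [DecidableEq α] (x : α) (xs : List α) :
    levenshtein (Levenshtein.defaultCost (α := α)) (x :: xs) [] =
      1 + levenshtein (Levenshtein.defaultCost (α := α)) xs [] := rfl

theorem levenshtein_cons_cons {α : Type*} [DecidableEq α] (x : α) (xs : List α) (y : α) (ys : List α) :
    levenshtein (Levenshtein.defaultCost (α := α)) (x :: xs) (y :: ys) =
      min (1 + levenshtein Levenshtein.defaultCost xs (y :: ys))
        (min (1 + levenshtein Levenshtein.defaultCost (x :: xs) ys)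
          ((if x = y then 0 else 1) + levenshtein Levenshtein.defaultCost xs ys)) := by
  show (Levenshtein.impl _ (x :: xs) y (suffixLevenshtein _ (x :: xs) ys)).1[0]'(Levenshtein.impl _ (x :: xs) y (suffixLevenshtein _ (x :: xs) ys)).2 = _
  rw [LevPort.suffixLevenshtein_cons₁]
  rw [LevPort.impl_cons_fst_zero _ _ _ _ _ _ _ _
    (by simp [LevPort.suffixLevenshtein_length])]
  rfl

namespace EDaux
variable {α : Type*} [DecidableEq α]

lemma ed_nil_left (b : List α) : ED [] b = b.length := by
  induction b with
  | nil => simp [ED]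
  | cons y t ih => simp [ED, levenshtein_nil_cons] at *; omega

lemma ed_nil_right (a : List α) : ED a [] = a.length := by
  induction a with
  | nil => simp [ED]
  | cons x t ih => simp [ED, levenshtein_cons_nil] at *; omega

lemma ed_cons_cons (x y : α) (xs ys : List α) :
    ED (x::xs) (y::ys) =
      min (1 + ED xs (y::ys)) (min (1 + ED (x::xs) ys)
        ((if x = y then 0 else 1) + ED xs ys)) := by
  simp [ED, levenshtein_cons_cons]

lemma e_del (x : α) (xs ys : List α) : ED (x::xs) ys ≤ 1 + ED xs ys := by
  cases ys with
  | nil => simp [ed_nil_right, ed_nil_left]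
  | cons y t => rw [ed_cons_cons]; omega

lemma e_ins (y : α) (xs ys : List α) : ED xs (y::ys) ≤ 1 + ED xs ys := by
  cases xs with
  | nil => simp [ed_nil_left, ed_nil_right]
  | cons x t => rw [ed_cons_cons]; omega

end EDaux

namespace EDaux
variable {α : Type*} [DecidableEq α]

lemma d_ins (x : α) (xs ys : List α) : ED xs ys ≤ 1 + ED (x::xs) ys := by
  induction ys with
  | nil => simp [ed_nil_right]; omega
  | cons y t ih =>
    have h1 := e_ins y xs t
    rw [ed_cons_cons]
    omega

lemma d_del (y : α) (xs ys : List α) : ED xs ys ≤ 1 + ED xs (y::ys) := by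
  induction xs with
  | nil => simp [ed_nil_left]; omega
  | cons x t ih =>
    have h1 := e_del x t ys
    rw [ed_cons_cons]
    omega

lemma ed_cons_le (x y : α) (xs ys : List α) : ED xs ys ≤ ED (x::xs) (y::ys) := by
  have h1 := d_del y xs ys
  have h2 := d_ins x xs ys
  rw [ed_cons_cons]
  omega

lemma ed_ge_left : ∀ a b : List α, b.length ≤ a.length + ED a b
  | [], b => by simp [ed_nil_left]
  | x::t, [] => by simp
  | x::t, y::u => by
      have h1 := ed_ge_left t (y::u)
      have h2 := ed_ge_left (x::t) u
      have h3 := ed_ge_left t u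
      rw [ed_cons_cons]
      simp only [List.length_cons] at *
      omega
  termination_by a b => a.length + b.length

lemma ed_ge_right : ∀ a b : List α, a.length ≤ b.length + ED a b
  | [], b => by simp
  | x::t, [] => by simp [ed_nil_right]
  | x::t, y::u => by
      have h1 := ed_ge_right t (y::u)
      have h2 := ed_ge_right (x::t) u
      have h3 := ed_ge_right t u
      rw [ed_cons_cons]
      simp only [List.length_cons] at *
      omega
  termination_by a b => a.length + b.length

lemma ed_prepend_right (a u b : List α) : ED a (u ++ b) ≤ u.length + ED a b := by
  induction u with
  | nil => simp
  | cons y t ih =>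
    have := e_ins y a (t ++ b)
    simp only [List.cons_append, List.length_cons] at *
    omega

end EDaux

namespace EDaux
variable {α : Type*} [DecidableEq α]

lemma ed_snoc_right (d : α) : ∀ a b : List α, ED a b ≤ 1 + ED a (b ++ [d])
  | a, [] => by
      have := ed_ge_right a [d]
      simp [ed_nil_right] at *; omega
  | [], y::u => by simp [ed_nil_left]; omega
  | x::t, y::u => by
      have h1 := ed_snoc_right d t (y::u)
      have h2 := ed_snoc_right d (x::t) u
      have h3 := ed_snoc_right d t u
      rw [ed_cons_cons, show ((y::u) ++ [d]) = y::(u++[d]) from rfl, ed_cons_cons]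
      simp only [List.cons_append] at h1
      omega
  termination_by a b => a.length + b.length

lemma ed_drop_suffix_right (a : List α) : ∀ (v b : List α), ED a b ≤ ED a (b ++ v) + v.length
  | [], b => by simp
  | d::w, b => by
      have h1 := ed_snoc_right d a b
      have h2 := ed_drop_suffix_right a w (b ++ [d])
      simp only [List.append_assoc, List.cons_append, List.nil_append, List.length_cons] at *
      omega
  termination_by v b => v.length

lemma ed_prefix : ∀ (p p' a b : List α), p.length = p'.length →
    ED a b ≤ ED (p ++ a) (p' ++ b)
  | [], [], a, b, _ => by simp
  | x::t, y::t', a, b, h => by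
      have h1 := ed_prefix t t' a b (by simpa using h)
      have h2 := ed_cons_le x y (t ++ a) (t' ++ b)
      simp only [List.cons_append]
      omega
  | [], _::_, _, _, h => by simp at h
  | _::_, [], _, _, h => by simp at h

lemma ed_snoc_both (c d : α) : ∀ a b : List α, ED a b ≤ ED (a ++ [c]) (b ++ [d])
  | [], b => by
      have := ed_ge_left [c] (b ++ [d])
      simp [ed_nil_left] at *; omega
  | x::t, [] => by
      have := ed_ge_right (x::t ++ [c]) [d]
      simp [ed_nil_right] at *; omega
  | x::t, y::u => by
      have h1 := ed_snoc_both c d t (y::u)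
      have h2 := ed_snoc_both c d (x::t) u
      have h3 := ed_snoc_both c d t u
      rw [ed_cons_cons, show ((x::t) ++ [c]) = x::(t++[c]) from rfl,
        show ((y::u) ++ [d]) = y::(u++[d]) from rfl, ed_cons_cons]
      simp only [List.cons_append] at h1 h2
      omega
  termination_by a b => a.length + b.length

lemma ed_suffix : ∀ (q q' a b : List α), q.length = q'.length →
    ED a b ≤ ED (a ++ q) (b ++ q')
  | [], [], a, b, _ => by simp
  | c::w, d::w', a, b, h => by
      have h1 := ed_snoc_both c d a b
      have h2 := ed_suffix w w' (a ++ [c]) (b ++ [d]) (by simpa using h)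
      simp only [List.append_assoc, List.cons_append, List.nil_append] at *
      omega
  | [], _::_, _, _, h => by simp at h
  | _::_, [], _, _, h => by simp at h
  termination_by q _ _ _ => q.length

lemma ed_infix (p p' a b q q' : List α) (hp : p.length = p'.length)
    (hq : q.length = q'.length) : ED a b ≤ ED (p ++ (a ++ q)) (p' ++ (b ++ q')) := by
  calc ED a b ≤ ED (a ++ q) (b ++ q') := ed_suffix q q' a b hq
    _ ≤ _ := ed_prefix p p' _ _ hp

end EDaux


open EDaux in
/-- If ED(X[Δ..n), Y[0..n−Δ)) ≤ γ for some shift Δ ∈ [0,β), and x ∈ [Δ,β],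
y ∈ [0,x−Δ] with x−Δ−y ≤ γ, then the windows X[x..x+n') and Y[y..y+n')
with n' = n−β are at edit distance at most 3γ. -/
theorem stmt_8 {α : Type*} [DecidableEq α] (n β γ Δ x y : ℕ) (X Y : List α)
    (hX : X.length = n) (hY : Y.length = n) (hβn : β ≤ n) (hΔ : Δ < β)
    (h : ED (X.drop Δ) (Y.take (n - Δ)) ≤ γ)
    (hxl : Δ ≤ x) (hxu : x ≤ β) (hyu : y ≤ x - Δ) (hshift : x - Δ - y ≤ γ) :
    ED ((X.drop x).take (n - β)) ((Y.drop y).take (n - β)) ≤ 3 * γ := by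
  set n' := n - β with hn'
  set s := x - Δ - y with hs
  -- Step 3 (heredity): ED of the X-window vs the shifted Y-window is ≤ γ
  have step3 : ED ((X.drop x).take n') ((Y.drop (x - Δ)).take n') ≤ γ := by
    refine le_trans ?_ h
    have hdX : X.drop Δ = (X.drop Δ).take (x - Δ) ++
        ((X.drop x).take n' ++ (X.drop x).drop n') := by
      rw [List.take_append_drop n' (X.drop x),
        show X.drop x = (X.drop Δ).drop (x - Δ) by rw [List.drop_drop]; congr 1; omega,
        List.take_append_drop]
    have hdY : Y.take (n - Δ) = (Y.take (n - Δ)).take (x - Δ) ++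
        ((Y.drop (x - Δ)).take n' ++ ((Y.drop (x - Δ)).take (n - x)).drop n') := by
      have hYs2 : ((Y.drop (x - Δ)).take (n - x)).take n' = (Y.drop (x - Δ)).take n' := by
        rw [List.take_take]; congr 1; omega
      rw [← hYs2, List.take_append_drop n',
        show (Y.drop (x - Δ)).take (n - x) = (Y.take (n - Δ)).drop (x - Δ) by
          rw [List.drop_take]; congr 1; omega,
        List.take_append_drop]
    conv_rhs => rw [hdX, hdY]
    apply ed_infix
    · simp only [List.length_take, List.length_drop, hX, hY]; omega
    · simp only [List.length_drop, List.length_take, hX, hY]; omega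
  -- Step 1: pad the Y-window on the right, cost ≤ s
  have hV : (Y.drop y).take (s + n') = (Y.drop y).take n' ++ ((Y.drop y).drop n').take s := by
    rw [show s + n' = n' + s by omega, List.take_add]
  have c1 : ED ((X.drop x).take n') ((Y.drop y).take n') ≤
      ED ((X.drop x).take n') ((Y.drop y).take (s + n')) + s := by
    have h1 := ed_drop_suffix_right ((X.drop x).take n')
      (((Y.drop y).drop n').take s) ((Y.drop y).take n')
    rw [← hV] at h1
    have h2 : (((Y.drop y).drop n').take s).length ≤ s := by
      simp only [List.length_take]; omega
    omega
  -- Step 2: the padded window is prefix ++ shifted window, cost ≤ s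
  have hP : (Y.drop y).take (s + n') = (Y.drop y).take s ++ (Y.drop (x - Δ)).take n' := by
    rw [List.take_add, List.drop_drop, show y + s = x - Δ by omega]
  have c2 : ED ((X.drop x).take n') ((Y.drop y).take (s + n')) ≤
      s + ED ((X.drop x).take n') ((Y.drop (x - Δ)).take n') := by
    rw [hP]
    have h1 := ed_prepend_right ((X.drop x).take n') ((Y.drop y).take s)
      ((Y.drop (x - Δ)).take n')
    have h2 : ((Y.drop y).take s).length ≤ s := by
      simp only [List.length_take]; omega
    omega
  omega
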